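/- Let v : [0,1] → ℝ be a twice continuously differentiable function, let r, c > 0, and suppose v satisfies the ODE 2·r²·c·(v(x) − x) = (max(v''(x),0))² on [0, x̄) for some x̄ ∈ (0,1], with v(x) > x and v''(x) > 0 on [0, x̄). If in addition 0 ≤ v'(x) ≤ 1 on [0, x̄), then the function a(x) := v''(x)/(r·c) is strictly decreasing on [0, x̄). -/

import Mathlib

open Set

/-- In the inactive benchmark, the optimal control a(x) = v''(x)/(rc) is
strictly decreasing on the active region. -/
theorem stmt0 (v : ℝ → ℝ) (r c xbar : ℝ)
    (hr : 0 < r) (hc : 0 < c) (hxbar : xbar ∈ Ioc (0:ℝ) 1)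
    (hv : ContDiff ℝ 2 v)
    (hode : ∀ x ∈ Ico (0:ℝ) xbar,
      2 * r^2 * c * (v x - x) = (max (deriv (deriv v) x) 0)^2)
    (hgt : ∀ x ∈ Ico (0:ℝ) xbar, v x > x)
    (h2pos : ∀ x ∈ Ico (0:ℝ) xbar, 0 < deriv (deriv v) x)
    (hd : ∀ x ∈ Ico (0:ℝ) xbar, 0 ≤ deriv v x ∧ deriv v x ≤ 1) :
    StrictAntiOn (fun x => deriv (deriv v) x / (r * c)) (Ico (0:ℝ) xbar) := by
  have hvdiff : Differentiable ℝ v := hv.differentiable (by norm_num)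
  have hv1 : ContDiff ℝ 1 (deriv v) := by
    have := (contDiff_succ_iff_deriv (n := 1)).mp (by exact_mod_cast hv)
    exact this.2.2
  intro x hx y hy hxy
  have hxycc : Icc x y ⊆ Ico 0 xbar := by
    intro z hz
    exact ⟨le_trans hx.1 hz.1, lt_of_le_of_lt hz.2 hy.2⟩
  -- g = v - id is antitone on [x,y]
  set g : ℝ → ℝ := fun t => v t - t with hg
  have hgdiff : Differentiable ℝ g := hvdiff.sub differentiable_id
  have hgderiv : ∀ z, deriv g z = deriv v z - 1 := by
    intro z
    have := ((hvdiff z).hasDerivAt.sub (hasDerivAt_id z)).deriv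
    exact this
  have hganti : AntitoneOn g (Icc x y) := by
    apply antitoneOn_of_deriv_nonpos (convex_Icc x y) hgdiff.continuous.continuousOn
      (fun z _ => (hgdiff z).differentiableWithinAt)
    intro z hz
    rw [interior_Icc] at hz
    have hzmem : z ∈ Ico (0:ℝ) xbar := hxycc ⟨le_of_lt hz.1, le_of_lt hz.2⟩
    rw [hgderiv]
    linarith [(hd z hzmem).2]
  have hgy_le : g y ≤ g x := hganti ⟨le_refl x, le_of_lt hxy⟩ ⟨le_of_lt hxy, le_refl y⟩ (le_of_lt hxy)
  -- strict inequality: otherwise g constant on [x,y], v'' = 0 inside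
  have hgy_lt : g y < g x := by
    rcases lt_or_eq_of_le hgy_le with h | h
    · exact h
    · exfalso
      set z := (x + y) / 2 with hz
      have hzmemIoo : z ∈ Ioo x y := ⟨by linarith, by linarith⟩
      have hconst : ∀ w ∈ Ioo x y, g w = g x := by
        intro w hw
        have h1 : g w ≤ g x := hganti ⟨le_refl x, le_of_lt hxy⟩ ⟨le_of_lt hw.1, le_of_lt hw.2⟩ (le_of_lt hw.1)
        have h2 : g y ≤ g w := hganti ⟨le_of_lt hw.1, le_of_lt hw.2⟩ ⟨le_of_lt hxy, le_refl y⟩ (le_of_lt hw.2)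
        linarith
      have hdv1 : ∀ w ∈ Ioo x y, deriv v w = 1 := by
        intro w hw
        have heq : g =ᶠ[nhds w] fun _ => g x :=
          Filter.eventuallyEq_of_mem (Ioo_mem_nhds hw.1 hw.2) hconst
        have := heq.deriv_eq
        rw [deriv_const] at this
        have h2 := hgderiv w
        rw [this] at h2
        linarith
      have heq2 : deriv v =ᶠ[nhds z] fun _ => (1:ℝ) :=
        Filter.eventuallyEq_of_mem (Ioo_mem_nhds hzmemIoo.1 hzmemIoo.2) hdv1
      have hdd : deriv (deriv v) z = 0 := by
        rw [heq2.deriv_eq, deriv_const]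
      have hzmem : z ∈ Ico (0:ℝ) xbar :=
        hxycc ⟨le_of_lt hzmemIoo.1, le_of_lt hzmemIoo.2⟩
      exact absurd hdd (ne_of_gt (h2pos z hzmem))
  -- conclude from the ODE
  have hox := hode x hx
  have hoy := hode y hy
  have hpx := h2pos x hx
  have hpy := h2pos y hy
  rw [max_eq_left (le_of_lt hpx)] at hox
  rw [max_eq_left (le_of_lt hpy)] at hoy
  have hrc2 : 0 < 2 * r^2 * c := by positivity
  have hgxy : v y - y < v x - x := hgy_lt
  have hsq : (deriv (deriv v) y)^2 < (deriv (deriv v) x)^2 := by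
    nlinarith [mul_lt_mul_of_pos_left hgxy hrc2]
  have hlt : deriv (deriv v) y < deriv (deriv v) x := by nlinarith
  have hrc : 0 < r * c := mul_pos hr hc
  exact (div_lt_div_iff_of_pos_right hrc).mpr hlt
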